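/- Let E be a complex Hilbert space, H : E →L[ℂ] E a self-adjoint bounded operator, K a closed subspace of E with H(K) ⊆ K, and P : E →L[ℂ] E a bounded operator whose range is contained in K and which vanishes on K (P ψ = 0 for all ψ ∈ K). Then the spectrum of H + P is contained in the spectrum of H. (This is the operator-theoretic core of the paper's Proposition that the spectrum of the Schrödinger-like Hamiltonian H_sch = H − γ^j γ₊ (i/β) ∂V/∂x_j is contained in the spectrum of the Schrödinger Hamiltonian H = −(1/β)Δ + V.) -/

import Mathlib

/-- Let `E` be a complex Hilbert space, `H : E →L[ℂ] E` a self-adjoint bounded operator,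
`K` a closed subspace of `E` with `H(K) ⊆ K`, and `P : E →L[ℂ] E` a bounded operator
whose range is contained in `K` and which vanishes on `K`.  Then the spectrum of
`H + P` is contained in the spectrum of `H`. -/
theorem spectrum_add_perturbation_subset
    {E : Type*} [NormedAddCommGroup E] [InnerProductSpace ℂ E] [CompleteSpace E]
    (H P : E →L[ℂ] E)
    (hH : IsSelfAdjoint H)
    (K : Submodule ℂ E)
    (hKclosed : IsClosed (K : Set E))
    (hHK : ∀ ψ ∈ K, H ψ ∈ K)
    (hPrange : ∀ ψ : E, P ψ ∈ K)
    (hPK : ∀ ψ ∈ K, P ψ = 0) :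
    spectrum ℂ (H + P) ⊆ spectrum ℂ H := by
  haveI : CompleteSpace K := hKclosed.completeSpace_coe
  intro lam hlam
  rw [spectrum.mem_iff] at hlam ⊢
  intro hA
  apply hlam
  set A : E →L[ℂ] E := algebraMap ℂ (E →L[ℂ] E) lam - H with hAdef
  obtain ⟨u, hu⟩ := hA
  set R : E →L[ℂ] E := ↑u⁻¹ with hRdef
  have hRA : R * A = 1 := by rw [hRdef, ← hu]; exact u.inv_mul
  have hAR : A * R = 1 := by rw [hRdef, ← hu]; exact u.mul_inv
  have hAapp : ∀ z : E, A z = lam • z - H z := by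
    intro z
    simp [hAdef, Algebra.algebraMap_eq_smul_one]
  -- A preserves K
  have hAK : ∀ z ∈ K, A z ∈ K := by
    intro z hz
    rw [hAapp]
    exact sub_mem (K.smul_mem _ hz) (hHK z hz)
  -- H (hence A) preserves Kᗮ
  have hAKperp : ∀ z ∈ Kᗮ, A z ∈ Kᗮ := by
    intro z hz
    rw [hAapp]
    refine sub_mem (Kᗮ.smul_mem _ hz) ?_
    rw [Submodule.mem_orthogonal] at hz ⊢
    intro w hw
    exact ((hH.isSymmetric w z).symm.trans (hz (H w) (hHK w hw)))
  -- R preserves K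
  have hRK : ∀ y ∈ K, R y ∈ K := by
    intro y hy
    set x : E := R y with hx
    set x₁ : E := (K.orthogonalProjectionOnto x : E) with hx₁def
    have hx₁ : x₁ ∈ K := Submodule.coe_mem _
    set x₂ : E := x - x₁ with hx₂def
    have hx₂ : x₂ ∈ Kᗮ := Submodule.sub_starProjection_mem_orthogonal x
    have hAx : A x = y := by
      have : A (R y) = (A * R) y := rfl
      rw [hx, this, hAR, ContinuousLinearMap.one_apply]
    have hAx₂K : A x₂ ∈ K := by
      have : A x₂ = y - A x₁ := by rw [hx₂def, map_sub, hAx]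
      rw [this]
      exact sub_mem hy (hAK _ hx₁)
    have hAx₂perp : A x₂ ∈ Kᗮ := hAKperp _ hx₂
    have hAx₂0 : A x₂ = 0 := by
      have h0 : inner ℂ (A x₂) (A x₂) = (0 : ℂ) :=
        (Submodule.mem_orthogonal Kᗮ (A x₂)).mp
          (Submodule.le_orthogonal_orthogonal K hAx₂K) (A x₂) hAx₂perp
      exact inner_self_eq_zero.mp h0
    have hx₂0 : x₂ = 0 := by
      have : R (A x₂) = (R * A) x₂ := rfl
      rw [hAx₂0, map_zero] at this
      rw [hRA, ContinuousLinearMap.one_apply] at this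
      exact this.symm
    have hxeq : x = x₁ := sub_eq_zero.mp hx₂0
    rw [hxeq]
    exact hx₁
  -- Q = R * P
  set Q : E →L[ℂ] E := R * P with hQdef
  have hQK : ∀ ψ : E, Q ψ ∈ K := fun ψ => hRK _ (hPrange ψ)
  have hPQ : P * Q = 0 := by
    ext ψ
    simp only [ContinuousLinearMap.mul_apply, ContinuousLinearMap.zero_apply]
    exact hPK _ (hQK ψ)
  have hQQ : Q * Q = 0 := by
    rw [hQdef]
    calc R * P * (R * P) = R * (P * (R * P)) := by noncomm_ring
    _ = R * 0 := by rw [← hQdef, hPQ]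
    _ = 0 := by noncomm_ring
  have hAQ : A * Q = P := by
    rw [hQdef, ← mul_assoc, hAR, one_mul]
  have hsub : algebraMap ℂ (E →L[ℂ] E) lam - (H + P) = A - P := by
    rw [hAdef]; noncomm_ring
  refine ⟨⟨algebraMap ℂ (E →L[ℂ] E) lam - (H + P), (1 + Q) * R, ?_, ?_⟩, rfl⟩
  · rw [hsub]
    calc (A - P) * ((1 + Q) * R)
        = A * R + (A * Q) * R - P * R - (P * Q) * R := by noncomm_ring
      _ = 1 := by rw [hAQ, hPQ, hAR]; noncomm_ring
  · rw [hsub]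
    calc ((1 + Q) * R) * (A - P)
        = R * A + Q * (R * A) - (R * P) - Q * (R * P) := by noncomm_ring
      _ = 1 + Q - Q - Q * Q := by rw [hRA, ← hQdef]; noncomm_ring
      _ = 1 := by rw [hQQ]; noncomm_ring
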